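/- Let f : [t₀,t₁] × ℝⁿ × ℝ^s → ℝ and g : [t₀,t₁] × ℝⁿ × ℝ^s → ℝⁿ be continuously differentiable, let y(t,p) solve y' = g(t,y,p), y(t₀) = y₀ with y differentiable in p, and define L(p) = ∫_{t₀}^{t₁} f(t, y(t,p), p) dt. Suppose λ : [t₀,t₁] → ℝⁿ is C¹ and satisfies the adjoint equation λ'(t) = -∇_y f(t,y(t,p),p) - (∂g/∂y)(t,y(t,p),p)ᵀ λ(t) with terminal condition λ(t₁) = 0. Then ∂L/∂p_r = ∫_{t₀}^{t₁} [ ∂f/∂p_r(t,y(t,p),p) + λ(t) · ∂g/∂p_r(t,y(t,p),p) ] dt. -/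

import Mathlib

open Finset intervalIntegral

private lemma hasFDerivAt_partial_right' {E F G : Type*} [NormedAddCommGroup E] [NormedSpace ℝ E]
    [NormedAddCommGroup F] [NormedSpace ℝ F] [NormedAddCommGroup G] [NormedSpace ℝ G]
    {φ : E × F → G} {a : E} {b : F} (h : DifferentiableAt ℝ φ (a, b)) :
    HasFDerivAt (fun q => φ (a, q))
      ((fderiv ℝ φ (a, b)).comp (ContinuousLinearMap.inr ℝ E F)) b :=
  h.hasFDerivAt.comp b (hasFDerivAt_prodMk_right a b)

private lemma my_comp {E F G : Type*} [NormedAddCommGroup E] [NormedSpace ℝ E]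
    [NormedAddCommGroup F] [NormedSpace ℝ F] [NormedAddCommGroup G] [NormedSpace ℝ G]
    {φ : E → F} {ψ : F → G} {x : E} {φ' : E →L[ℝ] F} {ψ' : F →L[ℝ] G}
    (hφ : HasFDerivAt φ φ' x) (hψ : HasFDerivAt ψ ψ' (φ x)) :
    HasFDerivAt (fun q => ψ (φ q)) (ψ'.comp φ') x :=
  hψ.comp x hφ

set_option maxHeartbeats 1000000 in
/-- Adjoint-state gradient formula: if `y(t,p)` solves `y' = g(t,y,p)` with
`y(t₀,p) = y₀` independent of `p`, `L(p) = ∫_{t₀}^{t₁} f(t,y(t,p),p) dt`, and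
`λ` is `C¹` and solves the adjoint equation
`λ' = -∇_y f - (∂g/∂y)ᵀ λ` with `λ(t₁) = 0`, then
`∂L/∂p_r = ∫_{t₀}^{t₁} (∂f/∂p_r + λ · ∂g/∂p_r) dt`. -/
theorem adjoint_gradient_formula {n s : ℕ} (t₀ t₁ : ℝ) (ht : t₀ ≤ t₁)
    (f : ℝ → (Fin n → ℝ) → (Fin s → ℝ) → ℝ)
    (g : ℝ → (Fin n → ℝ) → (Fin s → ℝ) → Fin n → ℝ)
    (hf : ContDiff ℝ 1 (fun q : ℝ × (Fin n → ℝ) × (Fin s → ℝ) => f q.1 q.2.1 q.2.2))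
    (hg : ContDiff ℝ 1 (fun q : ℝ × (Fin n → ℝ) × (Fin s → ℝ) => g q.1 q.2.1 q.2.2))
    (y : ℝ → (Fin s → ℝ) → Fin n → ℝ) (y₀ : Fin n → ℝ)
    (hy : ContDiff ℝ 1 (fun q : ℝ × (Fin s → ℝ) => y q.1 q.2))
    (hode : ∀ t ∈ Set.Icc t₀ t₁, ∀ q, HasDerivAt (fun τ => y τ q) (g t (y t q) q) t)
    (hinit : ∀ q, y t₀ q = y₀)
    (p : Fin s → ℝ) (r : Fin s)
    (L : (Fin s → ℝ) → ℝ)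
    (hL : L = fun q => ∫ t in t₀..t₁, f t (y t q) q)
    (l l' : ℝ → Fin n → ℝ)
    (hl : ∀ t ∈ Set.Icc t₀ t₁, HasDerivAt l (l' t) t)
    (hl'cont : ContinuousOn l' (Set.Icc t₀ t₁))
    -- adjoint equation: λ_i' = -∂/∂y_i [f + λ·g]  (i.e. λ' = -∇_y f - (∂g/∂y)ᵀ λ)
    (hadj : ∀ t ∈ Set.Icc t₀ t₁, ∀ i,
      l' t i =
        -(fderiv ℝ (fun x => f t x p + ∑ k, l t k * g t x p k) (y t p))
          (Pi.single i 1))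
    (hterm : l t₁ = 0) :
    fderiv ℝ L p (Pi.single r 1) =
      ∫ t in t₀..t₁,
        (fderiv ℝ (fun q => f t (y t p) q) p (Pi.single r 1) +
          ∑ k, l t k * fderiv ℝ (fun q => g t (y t p) q k) p (Pi.single r 1)) := by
  classical
  have hI : Set.uIcc t₀ t₁ = Set.Icc t₀ t₁ := Set.uIcc_of_le ht
  have hIoc : Set.uIoc t₀ t₁ ⊆ Set.Icc t₀ t₁ := by
    rw [Set.uIoc_of_le ht]; exact Set.Ioc_subset_Icc_self
  set e : Fin s → ℝ := Pi.single r 1 with he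
  -- continuity of l on the interval
  have hlcont : ContinuousOn l (Set.Icc t₀ t₁) := fun t htt =>
    ((hl t htt).continuousAt).continuousWithinAt
  -- joint C¹ maps
  have hΦ : ContDiff ℝ 1 (fun z : ℝ × (Fin s → ℝ) => (z.1, y z.1 z.2, z.2)) :=
    contDiff_fst.prodMk (hy.prodMk contDiff_snd)
  have hG1 : ContDiff ℝ 1 (fun z : ℝ × (Fin s → ℝ) => f z.1 (y z.1 z.2) z.2) := hf.comp hΦ
  have hGg : ContDiff ℝ 1 (fun z : ℝ × (Fin s → ℝ) => g z.1 (y z.1 z.2) z.2) := hg.comp hΦ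
  -- partial derivatives in the parameter
  set D1 : ℝ × (Fin s → ℝ) → (Fin s → ℝ) →L[ℝ] ℝ :=
    fun z => (fderiv ℝ (fun w : ℝ × (Fin s → ℝ) => f w.1 (y w.1 w.2) w.2) z).comp
      (ContinuousLinearMap.inr ℝ ℝ (Fin s → ℝ)) with hD1def
  set Dg : ℝ × (Fin s → ℝ) → (Fin s → ℝ) →L[ℝ] (Fin n → ℝ) :=
    fun z => (fderiv ℝ (fun w : ℝ × (Fin s → ℝ) => g w.1 (y w.1 w.2) w.2) z).comp
      (ContinuousLinearMap.inr ℝ ℝ (Fin s → ℝ)) with hDgdef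
  set DY : ℝ × (Fin s → ℝ) → (Fin s → ℝ) →L[ℝ] (Fin n → ℝ) :=
    fun z => (fderiv ℝ (fun w : ℝ × (Fin s → ℝ) => y w.1 w.2) z).comp
      (ContinuousLinearMap.inr ℝ ℝ (Fin s → ℝ)) with hDYdef
  -- the augmented integrand and its parameter derivative
  set F : (Fin s → ℝ) → ℝ → ℝ := fun q t =>
    f t (y t q) q + ∑ k, l t k * g t (y t q) q k + ∑ k, l' t k * y t q k with hFdef
  set Fd : ℝ × (Fin s → ℝ) → (Fin s → ℝ) →L[ℝ] ℝ := fun z =>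
    D1 z + ∑ k, l z.1 k • ((ContinuousLinearMap.proj k).comp (Dg z))
         + ∑ k, l' z.1 k • ((ContinuousLinearMap.proj k).comp (DY z)) with hFddef
  -- differentiability of F in the parameter, with derivative Fd
  have hdiffF : ∀ (t : ℝ) (x : Fin s → ℝ), HasFDerivAt (fun q => F q t) (Fd (t, x)) x := by
    intro t x
    have h1 : HasFDerivAt (fun q => f t (y t q) q) (D1 (t, x)) x :=
      hasFDerivAt_partial_right' ((hG1.differentiable one_ne_zero) (t, x))
    have h2 : ∀ k, HasFDerivAt (fun q => g t (y t q) q k)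
        ((ContinuousLinearMap.proj k).comp (Dg (t, x))) x := fun k =>
      (ContinuousLinearMap.proj (R := ℝ) (φ := fun _ : Fin n => ℝ) k).hasFDerivAt.comp
        (x := x) (hf := hasFDerivAt_partial_right' ((hGg.differentiable one_ne_zero) (t, x)))
    have h3 : ∀ k, HasFDerivAt (fun q => y t q k)
        ((ContinuousLinearMap.proj k).comp (DY (t, x))) x := fun k =>
      (ContinuousLinearMap.proj (R := ℝ) (φ := fun _ : Fin n => ℝ) k).hasFDerivAt.comp
        (x := x) (hf := hasFDerivAt_partial_right' ((hy.differentiable one_ne_zero) (t, x)))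
    exact (h1.add (HasFDerivAt.fun_sum fun k _ => (h2 k).const_mul (l t k))).add
      (HasFDerivAt.fun_sum fun k _ => (h3 k).const_mul (l' t k))
  -- continuity of Fd on Icc × univ
  have hD1c : Continuous D1 := (hG1.continuous_fderiv one_ne_zero).clm_comp continuous_const
  have hDgc : Continuous Dg := (hGg.continuous_fderiv one_ne_zero).clm_comp continuous_const
  have hDYc : Continuous DY := (hy.continuous_fderiv one_ne_zero).clm_comp continuous_const
  set S : Set (ℝ × (Fin s → ℝ)) := Set.Icc t₀ t₁ ×ˢ (Set.univ : Set (Fin s → ℝ)) with hSdef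
  have hlS : ∀ k, ContinuousOn (fun z : ℝ × (Fin s → ℝ) => l z.1 k) S := by
    intro k
    exact (continuous_apply k).comp_continuousOn
      (hlcont.comp continuous_fst.continuousOn (fun z hz => hz.1))
  have hl'S : ∀ k, ContinuousOn (fun z : ℝ × (Fin s → ℝ) => l' z.1 k) S := by
    intro k
    exact (continuous_apply k).comp_continuousOn
      (hl'cont.comp continuous_fst.continuousOn (fun z hz => hz.1))
  have hFdc : ContinuousOn Fd S := by
    refine ((hD1c.continuousOn.add (continuousOn_finset_sum _ fun k _ => ?_)).add
      (continuousOn_finset_sum _ fun k _ => ?_))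
    · exact (hlS k).smul (continuous_const.clm_comp hDgc).continuousOn
    · exact (hl'S k).smul (continuous_const.clm_comp hDYc).continuousOn
  -- uniform bound on Fd over a compact set
  obtain ⟨C, hC⟩ : ∃ C, ∀ z ∈ (Set.Icc t₀ t₁ ×ˢ Metric.closedBall p 1), ‖Fd z‖ ≤ C :=
    (isCompact_Icc.prod (isCompact_closedBall p 1)).exists_bound_of_continuousOn
      (hFdc.mono (Set.prod_mono_right (Set.subset_univ _)))
  -- continuity of F in t
  have hFcont : ∀ q, ContinuousOn (fun t => F q t) (Set.Icc t₀ t₁) := by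
    intro q
    have h1 : Continuous (fun t => f t (y t q) q) :=
      hG1.continuous.comp (continuous_id.prodMk continuous_const)
    have h2 : ∀ k, Continuous (fun t => g t (y t q) q k) := fun k =>
      (continuous_apply k).comp (hGg.continuous.comp (continuous_id.prodMk continuous_const))
    have h3 : ∀ k, Continuous (fun t => y t q k) := fun k =>
      (continuous_apply k).comp (hy.continuous.comp (continuous_id.prodMk continuous_const))
    refine (h1.continuousOn.add (continuousOn_finset_sum _ fun k _ => ?_)).add
      (continuousOn_finset_sum _ fun k _ => ?_)
    · exact ((continuous_apply k).comp_continuousOn hlcont).mul (h2 k).continuousOn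
    · exact ((continuous_apply k).comp_continuousOn hl'cont).mul (h3 k).continuousOn
  have hFdpc : ContinuousOn (fun t => Fd (t, p)) (Set.Icc t₀ t₁) := by
    refine hFdc.comp (continuous_id.prodMk continuous_const).continuousOn
      (fun t htt => ⟨htt, Set.mem_univ _⟩)
  have hFdint : IntervalIntegrable (fun t => Fd (t, p)) MeasureTheory.volume t₀ t₁ := by
    apply ContinuousOn.intervalIntegrable; rw [hI]; exact hFdpc
  -- differentiation under the integral sign
  have key : HasFDerivAt (fun x => ∫ t in t₀..t₁, F x t)
      (∫ t in t₀..t₁, Fd (t, p)) p := by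
    refine intervalIntegral.hasFDerivAt_integral_of_dominated_of_fderiv_le
      (F' := fun x t => Fd (t, x)) (bound := fun _ => C) (Metric.ball_mem_nhds p one_pos)
      (Filter.Eventually.of_forall fun x =>
        (((hFcont x).mono hIoc).aestronglyMeasurable measurableSet_uIoc))
      ?_ (((hFdpc.mono hIoc).aestronglyMeasurable measurableSet_uIoc))
      (Filter.Eventually.of_forall fun t htt => fun x hx =>
        hC (t, x) ⟨hIoc htt, Metric.ball_subset_closedBall hx⟩)
      intervalIntegrable_const
      (Filter.Eventually.of_forall fun t _ => fun x _ => hdiffF t x)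
    · apply ContinuousOn.intervalIntegrable; rw [hI]; exact hFcont p
  -- integration by parts: ∫ F q = L q - const
  have hLeq : L = fun q => (∫ t in t₀..t₁, F q t) + ∑ k, l t₀ k * y₀ k := by
    funext q
    have h1 : Continuous (fun t => f t (y t q) q) :=
      hG1.continuous.comp (continuous_id.prodMk continuous_const)
    set w : ℝ → ℝ := fun t => ∑ k, l t k * y t q k with hwdef
    set w' : ℝ → ℝ := fun t => ∑ k, (l' t k * y t q k + l t k * g t (y t q) q k) with hw'def
    have hw : ∀ t ∈ Set.uIcc t₀ t₁, HasDerivAt w (w' t) t := by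
      rw [hI]; intro t htt
      exact HasDerivAt.fun_sum fun k _ =>
        (hasDerivAt_pi.1 (hl t htt) k).mul (hasDerivAt_pi.1 (hode t htt q) k)
    have hw'c : ContinuousOn w' (Set.Icc t₀ t₁) := by
      refine continuousOn_finset_sum _ fun k _ => ContinuousOn.add ?_ ?_
      · exact ((continuous_apply k).comp_continuousOn hl'cont).mul
          (((continuous_apply k).comp
            (hy.continuous.comp (continuous_id.prodMk continuous_const))).continuousOn)
      · exact ((continuous_apply k).comp_continuousOn hlcont).mul
          (((continuous_apply k).comp
            (hGg.continuous.comp (continuous_id.prodMk continuous_const))).continuousOn)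
    have hw'int : IntervalIntegrable w' MeasureTheory.volume t₀ t₁ := by
      apply ContinuousOn.intervalIntegrable; rw [hI]; exact hw'c
    have hsub : ∫ t in t₀..t₁, w' t = w t₁ - w t₀ :=
      intervalIntegral.integral_eq_sub_of_hasDerivAt hw hw'int
    have hw1 : w t₁ = 0 := by simp [hwdef, hterm]
    have hw0 : w t₀ = ∑ k, l t₀ k * y₀ k := by simp [hwdef, hinit q]
    have hFw : ∀ t, F q t = f t (y t q) q + w' t := by
      intro t; simp only [hFdef, hw'def, Finset.sum_add_distrib]; ring
    have hsplit : ∫ t in t₀..t₁, F q t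
        = (∫ t in t₀..t₁, f t (y t q) q) + ∫ t in t₀..t₁, w' t := by
      simp_rw [hFw]
      exact intervalIntegral.integral_add (h1.intervalIntegrable _ _) hw'int
    rw [hL]
    simp only [hsplit, hsub, hw1, hw0]
    ring
  -- the derivative of L
  have hLder : HasFDerivAt L (∫ t in t₀..t₁, Fd (t, p)) p := by
    rw [hLeq]; exact key.add_const _
  rw [hLder.fderiv, ContinuousLinearMap.intervalIntegral_apply hFdint e]
  -- pointwise identification of the integrand using the adjoint equation
  refine intervalIntegral.integral_congr ?_
  rw [hI]
  intro t htt
  show (Fd (t, p)) e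
      = fderiv ℝ (fun q => f t (y t p) q) p e
        + ∑ k, l t k * fderiv ℝ (fun q => g t (y t p) q k) p e
  -- fixed-time two-variable maps
  have hft : ContDiff ℝ 1 (fun w : (Fin n → ℝ) × (Fin s → ℝ) => f t w.1 w.2) :=
    hf.comp (contDiff_const.prodMk (contDiff_fst.prodMk contDiff_snd))
  have hgt : ContDiff ℝ 1 (fun w : (Fin n → ℝ) × (Fin s → ℝ) => g t w.1 w.2) :=
    hg.comp (contDiff_const.prodMk (contDiff_fst.prodMk contDiff_snd))
  set A : ((Fin n → ℝ) × (Fin s → ℝ)) →L[ℝ] ℝ :=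
    fderiv ℝ (fun w : (Fin n → ℝ) × (Fin s → ℝ) => f t w.1 w.2) (y t p, p) with hAdef
  set A2 : ((Fin n → ℝ) × (Fin s → ℝ)) →L[ℝ] (Fin n → ℝ) :=
    fderiv ℝ (fun w : (Fin n → ℝ) × (Fin s → ℝ) => g t w.1 w.2) (y t p, p) with hA2def
  have hA : HasFDerivAt (fun w : (Fin n → ℝ) × (Fin s → ℝ) => f t w.1 w.2) A (y t p, p) :=
    ((hft.differentiable one_ne_zero) _).hasFDerivAt
  have hA2 : HasFDerivAt (fun w : (Fin n → ℝ) × (Fin s → ℝ) => g t w.1 w.2) A2 (y t p, p) :=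
    ((hgt.differentiable one_ne_zero) _).hasFDerivAt
  set v : Fin n → ℝ := DY (t, p) e with hvdef
  -- chain rule identifications
  have hφ : HasFDerivAt (fun q : Fin s → ℝ => (y t q, q))
      ((DY (t, p)).prod (ContinuousLinearMap.id ℝ (Fin s → ℝ))) p :=
    (hasFDerivAt_partial_right' ((hy.differentiable one_ne_zero) (t, p))).prodMk (hasFDerivAt_id p)
  have hD1eq : D1 (t, p) = A.comp ((DY (t, p)).prod (ContinuousLinearMap.id ℝ (Fin s → ℝ))) :=
    (hasFDerivAt_partial_right' ((hG1.differentiable one_ne_zero) (t, p))).unique (my_comp hφ hA)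
  have hDgeq : Dg (t, p) = A2.comp ((DY (t, p)).prod (ContinuousLinearMap.id ℝ (Fin s → ℝ))) :=
    (hasFDerivAt_partial_right' ((hGg.differentiable one_ne_zero) (t, p))).unique (my_comp hφ hA2)
  have hD1e : D1 (t, p) e = A (v, e) := by rw [hD1eq]; rfl
  have hDge : Dg (t, p) e = A2 (v, e) := by rw [hDgeq]; rfl
  -- explicit parameter derivatives
  have hfq : fderiv ℝ (fun q => f t (y t p) q) p
      = A.comp (ContinuousLinearMap.inr ℝ (Fin n → ℝ) (Fin s → ℝ)) :=
    (hA.comp (x := p) (hf := hasFDerivAt_prodMk_right (y t p) p)).fderiv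
  have hgq : ∀ k, fderiv ℝ (fun q => g t (y t p) q k) p
      = (ContinuousLinearMap.proj k).comp
          (A2.comp (ContinuousLinearMap.inr ℝ (Fin n → ℝ) (Fin s → ℝ))) := fun k =>
    ((ContinuousLinearMap.proj (R := ℝ) (φ := fun _ : Fin n => ℝ) k).hasFDerivAt.comp
      (x := p) (hf := hA2.comp (x := p)
        (hf := hasFDerivAt_prodMk_right (y t p) p))).fderiv
  -- state derivatives and the adjoint combination
  set B' : (Fin n → ℝ) →L[ℝ] ℝ :=
    A.comp (ContinuousLinearMap.inl ℝ (Fin n → ℝ) (Fin s → ℝ))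
      + ∑ k, l t k • ((ContinuousLinearMap.proj k).comp
          (A2.comp (ContinuousLinearMap.inl ℝ (Fin n → ℝ) (Fin s → ℝ)))) with hB'def
  have hB : HasFDerivAt (fun x => f t x p + ∑ k, l t k * g t x p k) B' (y t p) := by
    have hfx : HasFDerivAt (fun x => f t x p)
        (A.comp (ContinuousLinearMap.inl ℝ (Fin n → ℝ) (Fin s → ℝ))) (y t p) :=
      (hA.comp (x := y t p) (hf := hasFDerivAt_prodMk_left (𝕜 := ℝ) (y t p) p) :)
    have hgx : ∀ k, HasFDerivAt (fun x => g t x p k)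
        ((ContinuousLinearMap.proj k).comp
          (A2.comp (ContinuousLinearMap.inl ℝ (Fin n → ℝ) (Fin s → ℝ)))) (y t p) := fun k =>
      (ContinuousLinearMap.proj (R := ℝ) (φ := fun _ : Fin n => ℝ) k).hasFDerivAt.comp
        (x := y t p) (hf := (hA2.comp (x := y t p)
          (hf := hasFDerivAt_prodMk_left (𝕜 := ℝ) (y t p) p) :))
    exact hfx.add (HasFDerivAt.fun_sum fun k _ => (hgx k).const_mul (l t k))
  have hBeq : fderiv ℝ (fun x => f t x p + ∑ k, l t k * g t x p k) (y t p) = B' := hB.fderiv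
  -- compute B' v via the adjoint equation
  have hB'single : ∀ i, B' (Pi.single i 1) = -(l' t i) := by
    intro i
    have := hadj t htt i
    rw [hBeq] at this
    linarith
  have hvexp : v = ∑ i, Pi.single i (v i) := (Finset.univ_sum_single v).symm
  have hB'v : B' v = -∑ i, l' t i * v i := by
    conv_lhs => rw [hvexp]
    rw [map_sum]
    rw [← Finset.sum_neg_distrib]
    refine Finset.sum_congr rfl fun i _ => ?_
    have hsm : Pi.single i (v i) = v i • (Pi.single i 1 : Fin n → ℝ) := by
      funext j
      by_cases h : j = i <;> simp [Pi.single_apply, h]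
    rw [hsm, map_smul, hB'single i, smul_eq_mul]
    ring
  -- expand B' v
  have hB'v' : B' v = A (v, 0) + ∑ k, l t k * A2 (v, 0) k := by
    simp [hB'def, ContinuousLinearMap.add_apply, ContinuousLinearMap.sum_apply,
      ContinuousLinearMap.smul_apply, ContinuousLinearMap.comp_apply,
      ContinuousLinearMap.inl_apply, ContinuousLinearMap.proj_apply, smul_eq_mul]
  -- splitting of A and A2
  have hsplitA : A (v, e) = A (v, 0) + A (0, e) := by
    rw [← map_add]
    congr 1
    simp [Prod.mk_add_mk]
  have hsplitA2 : A2 (v, e) = A2 (v, 0) + A2 (0, e) := by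
    rw [← map_add]
    congr 1
    simp [Prod.mk_add_mk]
  -- component identity for v
  have hvk : ∀ k, ((ContinuousLinearMap.proj k).comp (DY (t, p))) e = v k := fun k => rfl
  -- final assembly
  have hLHS : Fd (t, p) e
      = A (v, e) + ∑ k, l t k * A2 (v, e) k + ∑ k, l' t k * v k := by
    simp only [hFddef, ContinuousLinearMap.add_apply, ContinuousLinearMap.sum_apply,
      ContinuousLinearMap.smul_apply, smul_eq_mul, ContinuousLinearMap.comp_apply,
      ContinuousLinearMap.proj_apply, hD1e, hDge, hvdef]
  rw [hLHS, hfq]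
  have hRHSg : ∀ k, fderiv ℝ (fun q => g t (y t p) q k) p e = A2 (0, e) k := by
    intro k; rw [hgq k]; rfl
  have hRHSf : (A.comp (ContinuousLinearMap.inr ℝ (Fin n → ℝ) (Fin s → ℝ))) e = A (0, e) := rfl
  rw [hRHSf]
  simp_rw [hRHSg]
  rw [hsplitA]
  have hsum2 : ∑ k, l t k * A2 (v, e) k
      = (∑ k, l t k * A2 (v, 0) k) + ∑ k, l t k * A2 (0, e) k := by
    rw [← Finset.sum_add_distrib]
    refine Finset.sum_congr rfl fun k _ => ?_
    rw [hsplitA2]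
    simp [Pi.add_apply]
    ring
  rw [hsum2]
  have := hB'v.symm.trans hB'v'
  linarith [this]
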